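/- arXiv:1110.6858 — 5 statements merged into one kernel-verified Lean document; each statement's English description precedes it below -/
import Mathlib

section
/- Let A be a C*-algebra, d : A → A a derivation (a continuous linear map satisfying d(xy) = d(x)y + x d(y) for all x, y ∈ A), and I a closed two-sided ideal of A. Then d(I) ⊆ I; that is, every derivation of a C*-algebra leaves every closed two-sided ideal invariant. -/
open Filter Topology

lemma deriv_aux_real (s t : ℝ) (hs : 0 < s) :
    |t * (1 - t ^ 2 / (t ^ 2 + s)) ^ 2| ≤ Real.sqrt s / 2 := by
  have hc : 0 < t ^ 2 + s := by positivity
  have h1 : 1 - t ^ 2 / (t ^ 2 + s) = s / (t ^ 2 + s) := by field_simp; ring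
  rw [h1, abs_mul, abs_pow, abs_div, abs_of_pos hs, abs_of_pos hc]
  have hsqrt : 0 < Real.sqrt s := Real.sqrt_pos.mpr hs
  have hsq : Real.sqrt s ^ 2 = s := Real.sq_sqrt hs.le
  have key : 2 * |t| * Real.sqrt s ≤ t ^ 2 + s := by
    nlinarith [sq_nonneg (|t| - Real.sqrt s), sq_abs t]
  have h2 : (2 * |t| * Real.sqrt s) * (t ^ 2 + s) ≤ (t ^ 2 + s) ^ 2 := by
    nlinarith
  have h3 : Real.sqrt s * ((2 * |t| * Real.sqrt s) * (t ^ 2 + s)) ≤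
      Real.sqrt s * (t ^ 2 + s) ^ 2 :=
    mul_le_mul_of_nonneg_left h2 hsqrt.le
  have h4 : 2 * |t| * s * s ≤ 2 * |t| * s * (t ^ 2 + s) := by
    have : (0:ℝ) ≤ 2 * |t| * s := by positivity
    nlinarith [sq_nonneg t]
  rw [div_pow, mul_div_assoc', div_le_div_iff₀ (by positivity) two_pos]
  nlinarith [abs_nonneg t]

/-- Every derivation (continuous linear map satisfying the Leibniz rule) of a C*-algebra leaves
every closed two-sided ideal invariant. -/
theorem derivation_maps_closed_ideal_into_itself
    {A : Type*} [NonUnitalCStarAlgebra A] (d : A →L[ℂ] A)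
    (hd : ∀ x y : A, d (x * y) = d x * y + x * d y)
    (I : TwoSidedIdeal A) (hI : IsClosed (I : Set A)) :
    ∀ x ∈ I, d x ∈ I := by
  intro x hx
  set a : A := star x * x with ha_def
  have ha : IsSelfAdjoint a := IsSelfAdjoint.star_mul_self x
  have ha_mem : a ∈ I := I.mul_mem_left (star x) x hx
  set s : ℕ → ℝ := fun n => ((n : ℝ) + 1)⁻¹ with hs_def
  have hs_pos : ∀ n, 0 < s n := fun n => by positivity
  set g : ℕ → ℝ → ℝ := fun n t => t ^ 2 / (t ^ 2 + s n) with hg_def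
  have hden : ∀ n (t : ℝ), t ^ 2 + s n ≠ 0 := fun n t => by positivity
  have hgc : ∀ n, Continuous (g n) := fun n =>
    Continuous.div (by fun_prop) (by fun_prop) (hden n)
  have hg0 : ∀ n, g n 0 = 0 := fun n => by simp [hg_def]
  set v : ℕ → ℝ → ℝ := fun n t => t / (t ^ 2 + s n) with hv_def
  have hvc : ∀ n, Continuous (v n) := fun n =>
    Continuous.div (by fun_prop) (by fun_prop) (hden n)
  have hv0 : ∀ n, v n 0 = 0 := fun n => by simp [hv_def]
  set e : ℕ → A := fun n => cfcₙ (g n) a with he_def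
  have he_self : ∀ n, IsSelfAdjoint (e n) := fun n => cfcₙ_predicate _ a
  -- e n ∈ I
  have he_mem : ∀ n, e n ∈ I := by
    intro n
    have h1 : cfcₙ (fun t : ℝ => t * v n t) a = a * cfcₙ (v n) a :=
      (cfcₙ_mul (fun t : ℝ => t) (v n) a continuous_id'.continuousOn rfl
        ((hvc n).continuousOn) (hv0 n)).trans (by rw [cfcₙ_id' ℝ a])
    have h2 : (fun t : ℝ => t * v n t) = g n := by
      funext t
      simp only [hv_def, hg_def]
      rw [mul_div_assoc', ← sq]
    rw [h2] at h1
    show cfcₙ (g n) a ∈ I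
    rw [h1]
    exact I.mul_mem_right a _ ha_mem
  -- norm estimate
  have hnorm : ∀ n, ‖x - x * e n‖ ^ 2 ≤ Real.sqrt (s n) / 2 := by
    intro n
    have hq : ‖x - x * e n‖ ^ 2 = ‖star (x - x * e n) * (x - x * e n)‖ := by
      rw [CStarRing.norm_star_mul_self, sq]
    have hstar : star (x - x * e n) = star x - e n * star x := by
      rw [star_sub, star_mul, (he_self n).star_eq]
    have hexp : star (x - x * e n) * (x - x * e n)
        = a - a * e n - (e n * a - e n * (a * e n)) := by
      rw [hstar, sub_mul, mul_sub, mul_sub, ha_def]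
      simp only [mul_assoc]
    have hae : cfcₙ (fun t : ℝ => t * g n t) a = a * e n :=
      (cfcₙ_mul (fun t : ℝ => t) (g n) a continuous_id'.continuousOn rfl
        ((hgc n).continuousOn) (hg0 n)).trans (by rw [cfcₙ_id' ℝ a])
    have hea : cfcₙ (fun t : ℝ => g n t * t) a = e n * a :=
      (cfcₙ_mul (g n) (fun t : ℝ => t) a ((hgc n).continuousOn) (hg0 n)
        continuous_id'.continuousOn rfl).trans (by rw [cfcₙ_id' ℝ a])
    have heae : cfcₙ (fun t : ℝ => g n t * (t * g n t)) a = e n * (a * e n) :=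
      (cfcₙ_mul (g n) (fun t : ℝ => t * g n t) a ((hgc n).continuousOn) (hg0 n)
        (Continuous.continuousOn (by exact continuous_id.mul (hgc n)))
        (by simp [hg0 n])).trans (by rw [hae])
    have hS2 : cfcₙ (fun t : ℝ => t - t * g n t) a = a - a * e n :=
      (cfcₙ_sub (fun t : ℝ => t) (fun t : ℝ => t * g n t) a continuous_id'.continuousOn rfl
        (Continuous.continuousOn (by exact continuous_id.mul (hgc n)))
        (by simp [hg0 n])).trans (by rw [cfcₙ_id' ℝ a, hae])
    have hS3 : cfcₙ (fun t : ℝ => g n t * t - g n t * (t * g n t)) a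
        = e n * a - e n * (a * e n) :=
      (cfcₙ_sub (fun t : ℝ => g n t * t) (fun t : ℝ => g n t * (t * g n t)) a
        (Continuous.continuousOn (by exact (hgc n).mul continuous_id))
        (by simp [hg0 n])
        (Continuous.continuousOn (by exact (hgc n).mul (continuous_id.mul (hgc n))))
        (by simp [hg0 n])).trans (by rw [hea, heae])
    have hsum : cfcₙ (fun t : ℝ => (t - t * g n t) - (g n t * t - g n t * (t * g n t))) a
        = a - a * e n - (e n * a - e n * (a * e n)) :=
      (cfcₙ_sub (fun t : ℝ => t - t * g n t)
        (fun t : ℝ => g n t * t - g n t * (t * g n t)) a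
        (Continuous.continuousOn
          (by exact continuous_id.sub (continuous_id.mul (hgc n))))
        (by simp [hg0 n])
        (Continuous.continuousOn
          (by exact ((hgc n).mul continuous_id).sub ((hgc n).mul (continuous_id.mul (hgc n)))))
        (by simp [hg0 n])).trans (by rw [hS2, hS3])
    rw [hq, hexp, ← hsum]
    refine norm_cfcₙ_le fun t ht => ?_
    have heq : (t - t * g n t) - (g n t * t - g n t * (t * g n t))
        = t * (1 - g n t) ^ 2 := by ring
    rw [heq, Real.norm_eq_abs]
    simpa only [hg_def] using deriv_aux_real (s n) t (hs_pos n)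
  -- x * e n → x
  have htend : Tendsto (fun n => x * e n) atTop (𝓝 x) := by
    rw [tendsto_iff_norm_sub_tendsto_zero]
    have hb : ∀ n, ‖x * e n - x‖ ≤ Real.sqrt (Real.sqrt (s n) / 2) := by
      intro n
      rw [← norm_neg, neg_sub]
      have h := Real.sqrt_le_sqrt (hnorm n)
      rwa [Real.sqrt_sq (norm_nonneg _)] at h
    refine squeeze_zero (fun n => norm_nonneg _) hb ?_
    have h0 : Tendsto s atTop (𝓝 0) := by
      simp only [hs_def]
      simpa using tendsto_one_div_add_atTop_nhds_zero_nat (𝕜 := ℝ)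
    have hcont : Continuous fun y : ℝ => Real.sqrt (Real.sqrt y / 2) :=
      Real.continuous_sqrt.comp (Real.continuous_sqrt.div_const 2)
    have h1 := (hcont.tendsto 0).comp h0
    simpa [Function.comp_def] using h1
  -- conclude
  have hdt : Tendsto (fun n => d (x * e n)) atTop (𝓝 (d x)) :=
    (d.continuous.tendsto x).comp htend
  refine hI.mem_of_tendsto hdt (Filter.Eventually.of_forall fun n => ?_)
  show d (x * e n) ∈ I
  rw [hd x (e n)]
  exact I.add_mem (I.mul_mem_left (d x) (e n) (he_mem n)) (I.mul_mem_right x (d (e n)) hx)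
end

section
/- Let A be a C*-algebra and d : A → A a derivation. Then there exists a unique derivation D : M(A) → M(A) of the multiplier algebra M(A) of A such that D(ι(a)) = ι(d(a)) for all a ∈ A, where ι : A → M(A) is the canonical embedding of A into its multiplier algebra. -/
open scoped MultiplierAlgebra
open DoubleCentralizer ContinuousLinearMap

section Aux

variable {A : Type*} [NonUnitalCStarAlgebra A]

/-- In a C*-algebra, an element annihilated by left multiplication by everything is zero. -/
lemma aux_eq_zero_of_forall_mul_eq_zero (z : A) (h : ∀ c : A, c * z = 0) : z = 0 :=
  (CStarRing.star_mul_self_eq_zero_iff z).mp (h (star z))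

/-- A double centralizer over a C*-algebra is determined by its second coordinate. -/
lemma aux_dc_eq_of_snd (x y : 𝓜(ℂ, A)) (h : x.snd = y.snd) : x = y := by
  have hfst : x.fst = y.fst := by
    ext b
    refine sub_eq_zero.mp (aux_eq_zero_of_forall_mul_eq_zero _ fun c => ?_)
    rw [mul_sub, ← x.central, ← y.central, h, sub_self]
  exact DoubleCentralizer.ext ℂ A x y (Prod.ext hfst h)

lemma aux_mul_coe (m : 𝓜(ℂ, A)) (a : A) :
    m * (a : 𝓜(ℂ, A)) = ((m.fst a : A) : 𝓜(ℂ, A)) := by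
  refine aux_dc_eq_of_snd _ _ ?_
  ext b
  show (a : 𝓜(ℂ, A)).snd (m.snd b) = ((m.fst a : A) : 𝓜(ℂ, A)).snd b
  simp only [DoubleCentralizer.coe_snd, ContinuousLinearMap.flip_apply,
    ContinuousLinearMap.mul_apply']
  exact m.central b a

lemma aux_eq_zero_of_mul_coe (z : 𝓜(ℂ, A)) (h : ∀ a : A, z * (a : 𝓜(ℂ, A)) = 0) :
    z = 0 := by
  refine aux_dc_eq_of_snd _ _ ?_
  ext b
  show z.snd b = 0
  refine (CStarRing.mul_star_self_eq_zero_iff _).mp ?_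
  have := congrArg (fun w : 𝓜(ℂ, A) => w.snd b) (h (star (z.snd b)))
  simpa only [mul_snd, DoubleCentralizer.coe_snd, ContinuousLinearMap.flip_apply,
    ContinuousLinearMap.mul_apply', zero_snd, ContinuousLinearMap.zero_apply,
    ContinuousLinearMap.coe_mul, ContinuousLinearMap.mul_apply, Function.comp_apply] using this

variable (d : A →L[ℂ] A) (hd : ∀ x y : A, d (x * y) = d x * y + x * d y)

/-- The extension of a derivation to the multiplier algebra, as a bare function. -/
noncomputable def auxD (m : 𝓜(ℂ, A)) : 𝓜(ℂ, A) where
  toProd := (d * m.fst - m.fst * d, d * m.snd - m.snd * d)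
  central := by
    intro x y
    have h1 : d (m.snd x * y) = d (m.snd x) * y + m.snd x * d y := hd _ _
    have h2 : d (x * m.fst y) = d x * m.fst y + x * d (m.fst y) := hd _ _
    have h3 : m.snd x * y = x * m.fst y := m.central x y
    have h4 : x * m.fst (d y) = m.snd x * d y := (m.central x (d y)).symm
    have h5 : d x * m.fst y = m.snd (d x) * y := (m.central (d x) y).symm
    have key : d (m.snd x) * y + x * m.fst (d y) = m.snd (d x) * y + x * d (m.fst y) := by
      rw [h4, ← h1, h3, h2, h5]
    show (d * m.snd - m.snd * d) x * y = x * ((d * m.fst - m.fst * d) y)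
    simp only [ContinuousLinearMap.sub_apply, ContinuousLinearMap.mul_apply]
    rw [sub_mul, mul_sub, sub_eq_sub_iff_add_eq_add, key, add_comm]

lemma auxD_fst (m : 𝓜(ℂ, A)) : (auxD d hd m).fst = d * m.fst - m.fst * d := rfl

lemma auxD_snd (m : 𝓜(ℂ, A)) : (auxD d hd m).snd = d * m.snd - m.snd * d := rfl

/-- The extension as a continuous linear map. -/
noncomputable def auxDL : 𝓜(ℂ, A) →L[ℂ] 𝓜(ℂ, A) :=
  LinearMap.mkContinuous
    { toFun := auxD d hd
      map_add' := fun x y => by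
        refine DoubleCentralizer.ext ℂ A _ _ (Prod.ext ?_ ?_) <;>
        · simp only [auxD_fst, auxD_snd, add_fst, add_snd]
          noncomm_ring
      map_smul' := fun c x => by
        refine DoubleCentralizer.ext ℂ A _ _ (Prod.ext ?_ ?_) <;>
        · simp only [auxD_fst, auxD_snd, smul_fst, smul_snd, RingHom.id_apply,
            smul_sub, mul_smul_comm, smul_mul_assoc] }
    (2 * ‖d‖)
    (by
      intro m
      rw [← DoubleCentralizer.norm_fst, ← DoubleCentralizer.norm_fst m]
      show ‖d * m.fst - m.fst * d‖ ≤ 2 * ‖d‖ * ‖m.fst‖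
      calc ‖d * m.fst - m.fst * d‖ ≤ ‖d * m.fst‖ + ‖m.fst * d‖ := norm_sub_le _ _
        _ ≤ ‖d‖ * ‖m.fst‖ + ‖m.fst‖ * ‖d‖ := add_le_add (norm_mul_le _ _) (norm_mul_le _ _)
        _ = 2 * ‖d‖ * ‖m.fst‖ := by ring)

lemma auxDL_apply (m : 𝓜(ℂ, A)) : auxDL d hd m = auxD d hd m := rfl

lemma auxDL_leibniz (x y : 𝓜(ℂ, A)) :
    auxDL d hd (x * y) = auxDL d hd x * y + x * auxDL d hd y := by
  refine DoubleCentralizer.ext ℂ A _ _ (Prod.ext ?_ ?_) <;>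
  · simp only [auxDL_apply, auxD_fst, auxD_snd, mul_fst, mul_snd, add_fst, add_snd]
    noncomm_ring

lemma auxDL_coe (a : A) : auxDL d hd ((a : 𝓜(ℂ, A))) = ((d a : A) : 𝓜(ℂ, A)) := by
  refine DoubleCentralizer.ext ℂ A _ _ (Prod.ext ?_ ?_)
  · ext b
    show d ((a : 𝓜(ℂ, A)).fst b) - (a : 𝓜(ℂ, A)).fst (d b) = ((d a : A) : 𝓜(ℂ, A)).fst b
    simp only [DoubleCentralizer.coe_fst, ContinuousLinearMap.mul_apply', hd]
    abel
  · ext b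
    show d ((a : 𝓜(ℂ, A)).snd b) - (a : 𝓜(ℂ, A)).snd (d b) = ((d a : A) : 𝓜(ℂ, A)).snd b
    simp only [DoubleCentralizer.coe_snd, ContinuousLinearMap.flip_apply,
      ContinuousLinearMap.mul_apply', hd]
    abel

end Aux

/-- Every derivation `d` of a C*-algebra `A` extends uniquely to a derivation `D` of the
multiplier algebra `𝓜(ℂ, A)`, in the sense that `D (ι a) = ι (d a)` for all `a ∈ A`, where
`ι : A → 𝓜(ℂ, A)` is the canonical embedding of `A` into its multiplier algebra. -/
theorem derivation_extends_uniquely_to_multiplier_algebra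
    {A : Type*} [NonUnitalCStarAlgebra A] (d : A →L[ℂ] A)
    (hd : ∀ x y : A, d (x * y) = d x * y + x * d y) :
    ∃! D : 𝓜(ℂ, A) →L[ℂ] 𝓜(ℂ, A),
      (∀ x y : 𝓜(ℂ, A), D (x * y) = D x * y + x * D y) ∧
      ∀ a : A, D ((a : 𝓜(ℂ, A))) = ((d a : A) : 𝓜(ℂ, A)) := by
  refine ⟨auxDL d hd, ⟨auxDL_leibniz d hd, auxDL_coe d hd⟩, ?_⟩
  rintro D' ⟨hmul, hcoe⟩
  refine ContinuousLinearMap.ext fun m => ?_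
  have key : ∀ a : A, D' m * (a : 𝓜(ℂ, A)) = auxDL d hd m * (a : 𝓜(ℂ, A)) := by
    intro a
    have h1 : D' (m * (a : 𝓜(ℂ, A))) = D' m * a + m * ((d a : A) : 𝓜(ℂ, A)) := by
      rw [hmul, hcoe]
    have h2 : auxDL d hd (m * (a : 𝓜(ℂ, A))) =
        auxDL d hd m * a + m * ((d a : A) : 𝓜(ℂ, A)) := by
      rw [auxDL_leibniz, auxDL_coe]
    have h3 : D' (m * (a : 𝓜(ℂ, A))) = auxDL d hd (m * (a : 𝓜(ℂ, A))) := by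
      rw [aux_mul_coe, hcoe, auxDL_coe]
    have := h1.symm.trans (h3.trans h2)
    exact add_right_cancel this
  have : (D' m - auxDL d hd m) = 0 := by
    refine aux_eq_zero_of_mul_coe _ fun a => ?_
    rw [sub_mul, key a, sub_self]
  exact sub_eq_zero.mp this
end

section
/- Let A be a C*-algebra, d : A → A a derivation, and I an essential closed two-sided ideal of A. Then there exists a unique derivation D : M(I) → M(I) of the multiplier algebra of I such that D(ι_I(a)) = ι_I(d(a)) for all a ∈ A, where ι_I : A → M(I) is the canonical (injective) *-homomorphism given by left and right multiplication on I. In particular, d extends to a derivation of M(I) under the identification of A with its image in M(I). -/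
open scoped MultiplierAlgebra

/-- Every selfadjoint element of a non-unital C*-algebra is a difference of two squares. -/
lemma sq_decomp_of_isSelfAdjoint {I : Type*} [NonUnitalCStarAlgebra I] (s : I)
    (hs : IsSelfAdjoint s) : ∃ t u : I, s = t * t - u * u := by
  refine ⟨cfcₙ (fun r : ℝ => Real.sqrt (max r 0)) s,
    cfcₙ (fun r : ℝ => Real.sqrt (max (-r) 0)) s, ?_⟩
  have hc1 : Continuous (fun r : ℝ => Real.sqrt (max r 0)) :=
    Real.continuous_sqrt.comp (continuous_id.max continuous_const)
  have hc2 : Continuous (fun r : ℝ => Real.sqrt (max (-r) 0)) :=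
    Real.continuous_sqrt.comp (continuous_neg.max continuous_const)
  rw [← cfcₙ_mul _ _ s hc1.continuousOn (by simp) hc1.continuousOn (by simp),
    ← cfcₙ_mul _ _ s hc2.continuousOn (by simp) hc2.continuousOn (by simp),
    ← cfcₙ_sub (fun r : ℝ => Real.sqrt (max r 0) * Real.sqrt (max r 0))
      (fun r : ℝ => Real.sqrt (max (-r) 0) * Real.sqrt (max (-r) 0)) s ((hc1.mul hc1).continuousOn) (by simp) ((hc2.mul hc2).continuousOn) (by simp)]
  conv_lhs => rw [← cfcₙ_id ℝ s hs]
  apply cfcₙ_congr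
  intro r _
  have h1 : Real.sqrt (max r 0) * Real.sqrt (max r 0) = max r 0 :=
    Real.mul_self_sqrt (le_max_right _ _)
  have h2 : Real.sqrt (max (-r) 0) * Real.sqrt (max (-r) 0) = max (-r) 0 :=
    Real.mul_self_sqrt (le_max_right _ _)
  simp only [id_eq, h1, h2, max_zero_sub_max_neg_zero_eq_self]

set_option maxHeartbeats 2000000 in
/-- Let `A` be a C*-algebra, `d : A → A` a derivation, and `I` an essential closed two-sided
ideal of `A` (presented abstractly via an isometric *-homomorphism `j : I → A` whose range is an
essential closed two-sided ideal of `A`).  Then there is a unique derivation `D` of the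
multiplier algebra `𝓜(ℂ, I)` of `I` such that `D (ι a) = ι (d a)` for all `a ∈ A`, where
`ι : A → 𝓜(ℂ, I)` is the canonical (injective) *-homomorphism given by left and right
multiplication on `I`. -/
theorem derivation_extends_uniquely_to_multiplier_algebra_of_essential_ideal
    {A I : Type*} [NonUnitalCStarAlgebra A] [NonUnitalCStarAlgebra I]
    (d : A →L[ℂ] A) (hd : ∀ x y : A, d (x * y) = d x * y + x * d y)
    (j : I →⋆ₙₐ[ℂ] A) (hj : Isometry j) (hclosed : IsClosed (Set.range j))
    (hideal : ∀ (a : A) (x : I), a * j x ∈ Set.range j ∧ j x * a ∈ Set.range j)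
    (hess : ∀ a : A, (∀ x : I, a * j x = 0) → a = 0)
    (ι : A →⋆ₙₐ[ℂ] 𝓜(ℂ, I))
    (hι : ∀ (a : A) (x : I), j ((ι a).fst x) = a * j x ∧ j ((ι a).snd x) = j x * a) :
    ∃! D : 𝓜(ℂ, I) →L[ℂ] 𝓜(ℂ, I),
      (∀ x y : 𝓜(ℂ, I), D (x * y) = D x * y + x * D y) ∧
      ∀ a : A, D (ι a) = ι (d a) := by
  have hjinj : Function.Injective j := hj.injective
  -- the range of `j` is closed under the algebraic operations
  have hr_add : ∀ {a b : A}, a ∈ Set.range j → b ∈ Set.range j → a + b ∈ Set.range j := by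
    rintro a b ⟨x, rfl⟩ ⟨y, rfl⟩; exact ⟨x + y, map_add j x y⟩
  have hr_sub : ∀ {a b : A}, a ∈ Set.range j → b ∈ Set.range j → a - b ∈ Set.range j := by
    rintro a b ⟨x, rfl⟩ ⟨y, rfl⟩; exact ⟨x - y, map_sub j x y⟩
  have hr_smul : ∀ (c : ℂ) {a : A}, a ∈ Set.range j → c • a ∈ Set.range j := by
    rintro c a ⟨x, rfl⟩; exact ⟨c • x, map_smul j c x⟩
  -- `d` maps the range of `j` into itself
  have hsq : ∀ t : I, d (j (t * t)) ∈ Set.range j := by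
    intro t
    rw [map_mul, hd]
    exact hr_add (hideal (d (j t)) t).1 (hideal (d (j t)) t).2
  have hsa : ∀ s : I, IsSelfAdjoint s → d (j s) ∈ Set.range j := by
    intro s hs
    obtain ⟨t, u, hstu⟩ := sq_decomp_of_isSelfAdjoint s hs
    rw [hstu, map_sub, map_sub]
    exact hr_sub (hsq t) (hsq u)
  have hdj : ∀ y : I, d (j y) ∈ Set.range j := by
    intro y
    have c2 : (starRingEnd ℂ) 2 = 2 := map_ofNat _ 2
    have h1 : IsSelfAdjoint ((2:ℂ)⁻¹ • (y + star y)) := by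
      simp only [IsSelfAdjoint, star_smul, star_add, star_star, Complex.star_def, map_inv₀, c2]
      rw [add_comm (star y) y]
    have h2 : IsSelfAdjoint ((2 * Complex.I : ℂ)⁻¹ • (y - star y)) := by
      simp only [IsSelfAdjoint, star_smul, star_sub, star_star, Complex.star_def, map_inv₀,
        map_mul, Complex.conj_I, c2]
      rw [mul_neg, inv_neg, neg_smul, ← smul_neg, neg_sub]
    have hy : y = (2:ℂ)⁻¹ • (y + star y)
        + Complex.I • ((2 * Complex.I : ℂ)⁻¹ • (y - star y)) := by
      rw [smul_smul]
      have key : Complex.I * (2 * Complex.I : ℂ)⁻¹ = (2:ℂ)⁻¹ := by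
        rw [mul_inv, ← mul_assoc, mul_comm Complex.I, mul_assoc,
          mul_inv_cancel₀ Complex.I_ne_zero, mul_one]
      rw [key, ← smul_add]
      have h2y : (y + star y) + (y - star y) = (2:ℂ) • y := by
        rw [two_smul]; abel
      rw [h2y, smul_smul]
      norm_num
    have : d (j y) = d (j ((2:ℂ)⁻¹ • (y + star y)))
        + Complex.I • d (j ((2 * Complex.I : ℂ)⁻¹ • (y - star y))) := by
      conv_lhs => rw [hy]
      simp only [map_add, map_smul]
    rw [this]
    exact hr_add (hsa _ h1) (hr_smul _ (hsa _ h2))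
  -- the derivation `δ` induced on `I`
  have hdj' : ∀ y : I, ∃ x : I, j x = d (j y) := hdj
  choose δ₀ hδ₀ using hdj'
  have hjnorm : ∀ x : I, ‖j x‖ = ‖x‖ := fun x => hj.norm_map_of_map_zero (map_zero j) x
  have hδ₀add : ∀ x y : I, δ₀ (x + y) = δ₀ x + δ₀ y := by
    intro x y
    apply hjinj
    rw [map_add, hδ₀, hδ₀, hδ₀, map_add, map_add]
  have hδ₀smul : ∀ (c : ℂ) (x : I), δ₀ (c • x) = c • δ₀ x := by
    intro c x
    apply hjinj
    rw [map_smul, hδ₀, hδ₀, map_smul, map_smul]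
  let δL : I →ₗ[ℂ] I :=
    { toFun := δ₀, map_add' := hδ₀add, map_smul' := hδ₀smul }
  let δ : I →L[ℂ] I := δL.mkContinuous ‖d‖ (by
    intro x
    show ‖δ₀ x‖ ≤ ‖d‖ * ‖x‖
    rw [← hjnorm (δ₀ x), hδ₀]
    calc ‖d (j x)‖ ≤ ‖d‖ * ‖j x‖ := d.le_opNorm (j x)
      _ = ‖d‖ * ‖x‖ := by rw [hjnorm])
  have hjδ : ∀ x : I, j (δ x) = d (j x) := hδ₀
  have hδmul : ∀ x y : I, δ (x * y) = δ x * y + x * δ y := by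
    intro x y
    apply hjinj
    rw [hjδ, map_mul, hd, map_add, map_mul, map_mul, hjδ, hjδ]
  -- faithfulness of multiplication in `I`
  have hfaith_l : ∀ w : I, (∀ z : I, z * w = 0) → w = 0 := by
    intro w h
    have := h (star w)
    rwa [CStarRing.star_mul_self_eq_zero_iff] at this
  have hfaith_r : ∀ w : I, (∀ z : I, w * z = 0) → w = 0 := by
    intro w h
    have := h (star w)
    rwa [CStarRing.mul_star_self_eq_zero_iff] at this
  -- left centralizers are right module maps
  have hLmul : ∀ (m : 𝓜(ℂ, I)) (x y : I), m.fst (x * y) = m.fst x * y := by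
    intro m x y
    have key : ∀ z : I, z * (m.fst (x * y) - m.fst x * y) = 0 := by
      intro z
      have e1 : z * m.fst (x * y) = m.snd z * (x * y) := (m.central z (x * y)).symm
      have e2 : z * (m.fst x * y) = m.snd z * (x * y) := by
        rw [← mul_assoc, ← m.central, mul_assoc]
      rw [mul_sub, e1, e2, sub_self]
    exact sub_eq_zero.mp (hfaith_l _ key)
  -- the extension of the derivation to the multiplier algebra
  let Dfun : 𝓜(ℂ, I) → 𝓜(ℂ, I) := fun m =>
    { toProd := (δ.comp m.fst - m.fst.comp δ, δ.comp m.snd - m.snd.comp δ)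
      central := by
        intro x y
        show (δ (m.snd x) - m.snd (δ x)) * y = x * (δ (m.fst y) - m.fst (δ y))
        have e1 : δ (m.snd x) * y = δ x * m.fst y + x * δ (m.fst y) - m.snd x * δ y := by
          have h1 : δ (m.snd x * y) = δ (m.snd x) * y + m.snd x * δ y := hδmul _ _
          have h2 : δ (m.snd x * y) = δ x * m.fst y + x * δ (m.fst y) := by
            rw [m.central, hδmul]
          exact eq_sub_of_add_eq (h1.symm.trans h2)
        rw [sub_mul, mul_sub, e1, m.central (δ x) y, m.central x (δ y)]
        abel }
  have Dfst : ∀ (m : 𝓜(ℂ, I)) (z : I), (Dfun m).fst z = δ (m.fst z) - m.fst (δ z) :=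
    fun m z => rfl
  have Dsnd : ∀ (m : 𝓜(ℂ, I)) (z : I), (Dfun m).snd z = δ (m.snd z) - m.snd (δ z) :=
    fun m z => rfl
  have Dadd : ∀ m n : 𝓜(ℂ, I), Dfun (m + n) = Dfun m + Dfun n := by
    intro m n
    refine DoubleCentralizer.ext ℂ I _ _ (Prod.ext (ContinuousLinearMap.ext fun z => ?_)
      (ContinuousLinearMap.ext fun z => ?_))
    · show (Dfun (m + n)).fst z = (Dfun m + Dfun n).fst z
      simp only [Dfst, Dsnd, DoubleCentralizer.add_fst, DoubleCentralizer.add_snd,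
        DoubleCentralizer.mul_fst, DoubleCentralizer.mul_snd, DoubleCentralizer.smul_fst,
        DoubleCentralizer.smul_snd, ContinuousLinearMap.sub_apply, ContinuousLinearMap.comp_apply,
        ContinuousLinearMap.add_apply, ContinuousLinearMap.smul_apply,
        ContinuousLinearMap.mul_apply, map_add, map_smul, map_sub, smul_sub]
      abel
    · show (Dfun (m + n)).snd z = (Dfun m + Dfun n).snd z
      simp only [Dfst, Dsnd, DoubleCentralizer.add_fst, DoubleCentralizer.add_snd,
        DoubleCentralizer.mul_fst, DoubleCentralizer.mul_snd, DoubleCentralizer.smul_fst,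
        DoubleCentralizer.smul_snd, ContinuousLinearMap.sub_apply, ContinuousLinearMap.comp_apply,
        ContinuousLinearMap.add_apply, ContinuousLinearMap.smul_apply,
        ContinuousLinearMap.mul_apply, map_add, map_smul, map_sub, smul_sub]
      abel
  have Dsmul : ∀ (c : ℂ) (m : 𝓜(ℂ, I)), Dfun (c • m) = c • Dfun m := by
    intro c m
    refine DoubleCentralizer.ext ℂ I _ _ (Prod.ext (ContinuousLinearMap.ext fun z => ?_)
      (ContinuousLinearMap.ext fun z => ?_))
    · show (Dfun (c • m)).fst z = (c • Dfun m).fst z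
      simp only [Dfst, Dsnd, DoubleCentralizer.add_fst, DoubleCentralizer.add_snd,
        DoubleCentralizer.mul_fst, DoubleCentralizer.mul_snd, DoubleCentralizer.smul_fst,
        DoubleCentralizer.smul_snd, ContinuousLinearMap.sub_apply, ContinuousLinearMap.comp_apply,
        ContinuousLinearMap.add_apply, ContinuousLinearMap.smul_apply,
        ContinuousLinearMap.mul_apply, map_add, map_smul, map_sub, smul_sub]
    · show (Dfun (c • m)).snd z = (c • Dfun m).snd z
      simp only [Dfst, Dsnd, DoubleCentralizer.add_fst, DoubleCentralizer.add_snd,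
        DoubleCentralizer.mul_fst, DoubleCentralizer.mul_snd, DoubleCentralizer.smul_fst,
        DoubleCentralizer.smul_snd, ContinuousLinearMap.sub_apply, ContinuousLinearMap.comp_apply,
        ContinuousLinearMap.add_apply, ContinuousLinearMap.smul_apply,
        ContinuousLinearMap.mul_apply, map_add, map_smul, map_sub, smul_sub]
  let DL : 𝓜(ℂ, I) →ₗ[ℂ] 𝓜(ℂ, I) :=
    { toFun := Dfun
      map_add' := Dadd
      map_smul' := Dsmul }
  let D : 𝓜(ℂ, I) →L[ℂ] 𝓜(ℂ, I) := DL.mkContinuous (2 * ‖δ‖) (by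
    intro m
    show ‖Dfun m‖ ≤ 2 * ‖δ‖ * ‖m‖
    calc ‖Dfun m‖ = ‖(Dfun m).fst‖ := (DoubleCentralizer.norm_fst _).symm
      _ = ‖δ.comp m.fst - m.fst.comp δ‖ := rfl
      _ ≤ ‖δ.comp m.fst‖ + ‖m.fst.comp δ‖ := norm_sub_le _ _
      _ ≤ ‖δ‖ * ‖m.fst‖ + ‖m.fst‖ * ‖δ‖ :=
          add_le_add (ContinuousLinearMap.opNorm_comp_le _ _)
            (ContinuousLinearMap.opNorm_comp_le _ _)
      _ = 2 * ‖δ‖ * ‖m.fst‖ := by ring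
      _ = 2 * ‖δ‖ * ‖m‖ := by rw [DoubleCentralizer.norm_fst])
  have hDapp : ∀ m : 𝓜(ℂ, I), D m = Dfun m := fun m => rfl
  -- D is a derivation
  have Dleib : ∀ m n : 𝓜(ℂ, I), D (m * n) = D m * n + m * D n := by
    intro m n
    rw [hDapp, hDapp, hDapp]
    refine DoubleCentralizer.ext ℂ I _ _ (Prod.ext (ContinuousLinearMap.ext fun z => ?_)
      (ContinuousLinearMap.ext fun z => ?_))
    · show (Dfun (m * n)).fst z = (Dfun m * n + m * Dfun n).fst z
      simp only [Dfst, Dsnd, DoubleCentralizer.add_fst, DoubleCentralizer.add_snd,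
        DoubleCentralizer.mul_fst, DoubleCentralizer.mul_snd, DoubleCentralizer.smul_fst,
        DoubleCentralizer.smul_snd, ContinuousLinearMap.sub_apply, ContinuousLinearMap.comp_apply,
        ContinuousLinearMap.add_apply, ContinuousLinearMap.smul_apply,
        ContinuousLinearMap.mul_apply, map_add, map_smul, map_sub, smul_sub]
      abel
    · show (Dfun (m * n)).snd z = (Dfun m * n + m * Dfun n).snd z
      simp only [Dfst, Dsnd, DoubleCentralizer.add_fst, DoubleCentralizer.add_snd,
        DoubleCentralizer.mul_fst, DoubleCentralizer.mul_snd, DoubleCentralizer.smul_fst,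
        DoubleCentralizer.smul_snd, ContinuousLinearMap.sub_apply, ContinuousLinearMap.comp_apply,
        ContinuousLinearMap.add_apply, ContinuousLinearMap.smul_apply,
        ContinuousLinearMap.mul_apply, map_add, map_smul, map_sub, smul_sub]
      abel
  -- D extends d
  have Dι : ∀ a : A, D (ι a) = ι (d a) := by
    intro a
    rw [hDapp]
    refine DoubleCentralizer.ext ℂ I _ _ (Prod.ext (ContinuousLinearMap.ext fun z => ?_)
      (ContinuousLinearMap.ext fun z => ?_))
    · show (Dfun (ι a)).fst z = (ι (d a)).fst z
      apply hjinj
      rw [Dfst, map_sub, hjδ, (hι a z).1, (hι a (δ z)).1, hjδ, hd, (hι (d a) z).1]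
      abel
    · show (Dfun (ι a)).snd z = (ι (d a)).snd z
      apply hjinj
      rw [Dsnd, map_sub, hjδ, (hι a z).2, (hι a (δ z)).2, hjδ, hd, (hι (d a) z).2]
      abel
  -- key facts for uniqueness
  have hιjfst : ∀ x y : I, (ι (j x)).fst y = x * y := by
    intro x y
    apply hjinj
    rw [(hι (j x) y).1, ← map_mul]
  have hιjsnd : ∀ x y : I, (ι (j x)).snd y = y * x := by
    intro x y
    apply hjinj
    rw [(hι (j x) y).2, ← map_mul]
  have hmulι : ∀ (m : 𝓜(ℂ, I)) (x : I), m * ι (j x) = ι (j (m.fst x)) := by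
    intro m x
    refine DoubleCentralizer.ext ℂ I _ _ (Prod.ext (ContinuousLinearMap.ext fun y => ?_)
      (ContinuousLinearMap.ext fun y => ?_))
    · show (m * ι (j x)).fst y = (ι (j (m.fst x))).fst y
      rw [DoubleCentralizer.mul_fst, ContinuousLinearMap.mul_apply, hιjfst, hιjfst, hLmul]
    · show (m * ι (j x)).snd y = (ι (j (m.fst x))).snd y
      rw [DoubleCentralizer.mul_snd, ContinuousLinearMap.mul_apply, hιjsnd, hιjsnd, m.central]
  have hgen : ∀ D₀ : 𝓜(ℂ, I) →L[ℂ] 𝓜(ℂ, I),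
      (∀ x y : 𝓜(ℂ, I), D₀ (x * y) = D₀ x * y + x * D₀ y) →
      (∀ a : A, D₀ (ι a) = ι (d a)) →
      ∀ (m : 𝓜(ℂ, I)) (x : I), D₀ m * ι (j x) = ι (j (δ (m.fst x))) - m * ι (j (δ x)) := by
    intro D₀ hl hc m x
    have h := hl m (ι (j x))
    rw [hmulι m x, hc (j (m.fst x)), hc (j x), ← hjδ (m.fst x), ← hjδ x] at h
    exact eq_sub_of_add_eq h.symm
  refine ⟨D, ⟨Dleib, Dι⟩, ?_⟩
  rintro D' ⟨hl', hc'⟩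
  refine ContinuousLinearMap.ext fun m => ?_
  have hzero : ∀ x : I, (D' m - D m) * ι (j x) = 0 := by
    intro x
    rw [sub_mul, hgen D' hl' hc' m x, hgen D Dleib Dι m x, sub_self]
  have hsnd0 : ∀ y : I, (D' m - D m).snd y = 0 := by
    intro y
    refine hfaith_r _ fun x => ?_
    have h := congrArg (fun w : 𝓜(ℂ, I) => w.snd y) (hzero x)
    simpa only [DoubleCentralizer.mul_snd, ContinuousLinearMap.mul_apply,
      DoubleCentralizer.zero_snd, ContinuousLinearMap.zero_apply, hιjsnd] using h
  have hfst0 : ∀ y : I, (D' m - D m).fst y = 0 := by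
    intro y
    refine hfaith_l _ fun z => ?_
    rw [← (D' m - D m).central z y, hsnd0, zero_mul]
  have hsub : D' m - D m = 0 := by
    refine DoubleCentralizer.ext ℂ I _ _ (Prod.ext (ContinuousLinearMap.ext fun y => ?_)
      (ContinuousLinearMap.ext fun y => ?_))
    · show (D' m - D m).fst y = (0 : 𝓜(ℂ, I)).fst y
      rw [hfst0, DoubleCentralizer.zero_fst, ContinuousLinearMap.zero_apply]
    · show (D' m - D m).snd y = (0 : 𝓜(ℂ, I)).snd y
      rw [hsnd0, DoubleCentralizer.zero_snd, ContinuousLinearMap.zero_apply]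
  exact sub_eq_zero.mp hsub
end

section
/- Let B be a simple C*-algebra whose center Z(B) = {z ∈ B : zb = bz for all b ∈ B} is nonzero. Then B is unital. -/
open scoped ContinuousMapZero

lemma central_cfcn {B : Type*} [NonUnitalCStarAlgebra B] {w : B} (hw : IsSelfAdjoint w)
    (hwc : ∀ b : B, w * b = b * w) (f : ℝ → ℝ) (b : B) :
    cfcₙ f w * b = b * cfcₙ f w := by
  refine cfcₙ_cases (fun x ↦ x * b = b * x) w f (by simp) fun hf hf0 hsa ↦ ?_
  have h0 : ((0 : quasispectrum ℝ w) : ℝ) = 0 := rfl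
  suffices H : ∀ g : C(quasispectrum ℝ w, ℝ)₀, cfcₙHom hsa g * b = b * cfcₙHom hsa g from H _
  intro g
  have hid : cfcₙHom hsa (ContinuousMapZero.id (quasispectrum ℝ w)) = w := cfcₙHom_id hsa
  induction g using ContinuousMapZero.induction_on_of_compact with
  | zero => simp
  | id => rw [hid]; exact hwc b
  | star_id => rw [map_star, hid, hw.star_eq]; exact hwc b
  | add f g hf hg => rw [map_add, add_mul, mul_add, hf, hg]
  | mul f g hf hg => rw [map_mul, mul_assoc, hg, ← mul_assoc, hf, mul_assoc]
  | smul r f hf => rw [map_smul, smul_mul_assoc, hf, mul_smul_comm]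
  | frequently f hfreq =>
      exact hfreq.mem_of_closed <| isClosed_eq
        (((cfcₙHom_continuous hsa).mul continuous_const))
        ((continuous_const.mul (cfcₙHom_continuous hsa)))

lemma ann_cases {B : Type*} [NonUnitalCStarAlgebra B]
    (hsimple : ∀ I : TwoSidedIdeal B, IsClosed (I : Set B) → I = ⊥ ∨ I = ⊤)
    (c : B) (hc : ∀ b : B, c * b = b * c) :
    (∀ x : B, c * x = 0) ∨ (∀ x : B, c * x = 0 → x = 0) := by
  set I : TwoSidedIdeal B := TwoSidedIdeal.mk' {x | c * x = 0}
    (by simp) (fun {x y} hx hy => by simp only [Set.mem_setOf_eq, mul_add] at *; rw [hx, hy, add_zero])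
    (fun {x} hx => by simp only [Set.mem_setOf_eq, mul_neg] at *; rw [hx, neg_zero])
    (fun {x y} hy => by
      simp only [Set.mem_setOf_eq] at *
      calc c * (x * y) = (c * x) * y := by rw [mul_assoc]
        _ = (x * c) * y := by rw [hc]
        _ = x * (c * y) := by rw [mul_assoc]
        _ = 0 := by rw [hy, mul_zero])
    (fun {x y} hx => by
      simp only [Set.mem_setOf_eq] at *
      rw [← mul_assoc, hx, zero_mul]) with hI
  have hclosed : IsClosed (I : Set B) := by
    rw [hI, TwoSidedIdeal.coe_mk']
    exact isClosed_singleton.preimage (continuous_const.mul continuous_id)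
  rcases hsimple I hclosed with h | h
  · right
    intro x hx
    have : x ∈ I := by rw [hI, TwoSidedIdeal.mem_mk']; exact hx
    rwa [h, TwoSidedIdeal.mem_bot] at this
  · left
    intro x
    have : x ∈ I := by rw [h]; exact TwoSidedIdeal.mem_top B
    rwa [hI, TwoSidedIdeal.mem_mk'] at this

/-- A simple C*-algebra with nonzero center is unital. -/
theorem simple_with_nonzero_center_unital
    {B : Type*} [NonUnitalCStarAlgebra B] [Nontrivial B]
    (hsimple : ∀ I : TwoSidedIdeal B, IsClosed (I : Set B) → I = ⊥ ∨ I = ⊤)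
    (hcenter : ∃ z : B, z ≠ 0 ∧ ∀ b : B, z * b = b * z) :
    ∃ e : B, ∀ b : B, e * b = b ∧ b * e = b := by
  obtain ⟨z, hz0, hzc⟩ := hcenter
  set w : B := star z * z with hwdef
  have hwsa : IsSelfAdjoint w := IsSelfAdjoint.star_mul_self z
  have hw0 : w ≠ 0 := by
    simpa [hwdef, CStarRing.star_mul_self_eq_zero_iff] using hz0
  have hszc : ∀ b : B, star z * b = b * star z := by
    intro b
    calc star z * b = star (star b * z) := by rw [star_mul, star_star]
      _ = star (z * star b) := by rw [hzc (star b)]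
      _ = b * star z := by rw [star_mul, star_star]
  have hwc : ∀ b : B, w * b = b * w := by
    intro b
    calc w * b = star z * (z * b) := by rw [hwdef, mul_assoc]
      _ = star z * (b * z) := by rw [hzc]
      _ = (star z * b) * z := by rw [mul_assoc]
      _ = (b * star z) * z := by rw [hszc]
      _ = b * w := by rw [hwdef, mul_assoc]
  -- key: quasispectrum has at most one nonzero point
  have key : ∀ s ∈ quasispectrum ℝ w, ∀ t ∈ quasispectrum ℝ w, s ≠ 0 → t ≠ 0 → s = t := by
    intro s hs t ht hs0 ht0
    by_contra hst
    set δ : ℝ := min |s - t| (min |s| |t|) / 2 with hδdef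
    have hδpos : 0 < δ := by
      apply div_pos _ (by norm_num)
      exact lt_min (abs_pos.mpr (sub_ne_zero.mpr hst)) (lt_min (abs_pos.mpr hs0) (abs_pos.mpr ht0))
    have hδs : 2 * δ ≤ |s| := by
      rw [hδdef]; rw [mul_div_cancel₀]
      · exact le_trans (min_le_right _ _) (min_le_left _ _)
      · norm_num
    have hδt : 2 * δ ≤ |t| := by
      rw [hδdef]; rw [mul_div_cancel₀]
      · exact le_trans (min_le_right _ _) (min_le_right _ _)
      · norm_num
    have hδst : 2 * δ ≤ |s - t| := by
      rw [hδdef]; rw [mul_div_cancel₀]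
      · exact min_le_left _ _
      · norm_num
    set f : ℝ → ℝ := fun x => max 0 (1 - |x - s| / δ) with hfdef
    set g : ℝ → ℝ := fun x => max 0 (1 - |x - t| / δ) with hgdef
    have hfc : Continuous f := by
      apply continuous_const.max
      exact continuous_const.sub (((continuous_id.sub continuous_const).abs).div_const δ)
    have hgc : Continuous g := by
      apply continuous_const.max
      exact continuous_const.sub (((continuous_id.sub continuous_const).abs).div_const δ)
    have hzero : ∀ (u : ℝ) (x : ℝ), 2 * δ ≤ |u| → δ ≤ |x - u| → max 0 (1 - |x - u| / δ) = 0 := by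
      intro u x _ hxu
      apply max_eq_left
      rw [sub_nonpos, le_div_iff₀ hδpos, one_mul]
      exact hxu
    have hf0 : f 0 = 0 := by
      apply hzero s 0 hδs
      rw [zero_sub, abs_neg]
      nlinarith [hδpos]
    have hg0 : g 0 = 0 := by
      apply hzero t 0 hδt
      rw [zero_sub, abs_neg]
      nlinarith [hδpos]
    have hfs : f s = 1 := by
      rw [hfdef]; simp
    have hgt : g t = 1 := by
      rw [hgdef]; simp
    have hfg : ∀ x, f x * g x = 0 := by
      intro x
      rcases le_or_gt δ |x - s| with h | h
      · rw [hfdef]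
        simp only []
        rw [hzero s x hδs h, zero_mul]
      · have : δ ≤ |x - t| := by
          have := abs_sub_abs_le_abs_sub (s - t) (x - t)
          have h2 : |s - t - (x - t)| = |x - s| := by
            rw [show s - t - (x - t) = -(x - s) by ring, abs_neg]
          nlinarith [abs_sub_abs_le_abs_sub (s - t) (x - t)]
        rw [hgdef]
        simp only []
        rw [hzero t x hδt this, mul_zero]
    set a : B := cfcₙ f w with hadef
    set c : B := cfcₙ g w with hcdef
    have hmul : a * c = 0 := by
      rw [hadef, hcdef, ← cfcₙ_mul f g w hfc.continuousOn hf0 hgc.continuousOn hg0]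
      have : (fun x => f x * g x) = fun _ : ℝ => 0 := funext hfg
      rw [this]
      exact cfcₙ_const_zero ℝ w
    have ha0 : a ≠ 0 := by
      intro h
      have hmap : quasispectrum ℝ a = f '' quasispectrum ℝ w :=
        cfcₙ_map_quasispectrum f w hfc.continuousOn hf0 hwsa
      have h1 : (1 : ℝ) ∈ quasispectrum ℝ a := by
        rw [hmap]; exact ⟨s, hs, hfs⟩
      rw [h, CFC.quasispectrum_zero_eq] at h1
      simp at h1
    have hc0 : c ≠ 0 := by
      intro h
      have hmap : quasispectrum ℝ c = g '' quasispectrum ℝ w :=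
        cfcₙ_map_quasispectrum g w hgc.continuousOn hg0 hwsa
      have h1 : (1 : ℝ) ∈ quasispectrum ℝ c := by
        rw [hmap]; exact ⟨t, ht, hgt⟩
      rw [h, CFC.quasispectrum_zero_eq] at h1
      simp at h1
    have hccentral : ∀ b : B, c * b = b * c := central_cfcn hwsa hwc g
    rcases ann_cases hsimple c hccentral with h | h
    · exact hc0 (CStarRing.mul_star_self_eq_zero_iff c |>.mp (h (star c)))
    · apply ha0
      apply h
      rw [← (cfcₙ_commute_cfcₙ f g w).eq, hmul]
  -- there is a nonzero spectral point
  have hex : ∃ t ∈ quasispectrum ℝ w, t ≠ 0 := by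
    by_contra h
    push_neg at h
    exact hw0 (CFC.eq_zero_of_quasispectrum_eq_zero (R := ℝ) (a := w) (fun x hx => h x hx) hwsa)
  obtain ⟨t, ht, ht0⟩ := hex
  -- w * w = t • w
  have hsq : w * w = t • w := by
    have h1 : cfcₙ (fun x : ℝ => x * x) w = w * w := by
      rw [cfcₙ_mul (fun x : ℝ => x) (fun x : ℝ => x) w continuous_id.continuousOn rfl
        continuous_id.continuousOn rfl, cfcₙ_id' ℝ w]
    have h2 : cfcₙ (fun x : ℝ => t * x) w = t • w := by
      have := cfcₙ_smul_id (R := ℝ) t w hwsa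
      simpa [smul_eq_mul] using this
    rw [← h1, ← h2]
    apply cfcₙ_congr
    intro x hx
    rcases eq_or_ne x 0 with rfl | hx0
    · simp
    · have : x = t := key x hx t ht hx0 ht0
      subst this
      simp
  set e : B := t⁻¹ • w with hedef
  have hec : ∀ b : B, e * b = b * e := by
    intro b
    rw [hedef, smul_mul_assoc, hwc, mul_smul_comm]
  have hee : e * e = e := by
    rw [hedef, smul_mul_assoc, mul_smul_comm, hsq, smul_smul, smul_smul]
    congr 1
    field_simp
  have he0 : e ≠ 0 := by
    rw [hedef]
    exact smul_ne_zero (inv_ne_zero ht0) hw0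
  rcases ann_cases hsimple e hec with h | h
  · exact absurd (hee ▸ h e) he0
  · refine ⟨e, fun b => ?_⟩
    have h1 : e * b = b := by
      have : e * (b - e * b) = 0 := by
        rw [mul_sub, ← mul_assoc, hee, sub_self]
      have := h _ this
      rwa [sub_eq_zero, eq_comm] at this
    exact ⟨h1, by rw [← hec, h1]⟩
end

section
/- Let B be a separable, simple, non-unital C*-algebra. Then there exists a sequence (e_n) of positive contractions in B which is a strictly increasing approximate identity of B satisfying e_n·e_{n+1} = e_n and ‖e_{n+1} − e_n‖ = 1 for all n; that is: 0 ≤ e_n ≤ e_{n+1} ≤ 1 with e_n ≠ e_{n+1}, e_n e_{n+1} = e_n, ‖e_{n+1} − e_n‖ = 1 for every n, and ‖e_n b − b‖ → 0 and ‖b e_n − b‖ → 0 for every b ∈ B. -/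
open Filter Topology Unitization

section AuxLemmas

variable {B : Type*} [NonUnitalCStarAlgebra B] [PartialOrder B] [StarOrderedRing B]

private lemma myContOn {c : ℝ} (hc : 0 < c) {s : Set ℝ} (hs : ∀ x ∈ s, 0 ≤ x) :
    ContinuousOn (fun x : ℝ => x * (c + x)⁻¹) s :=
  continuousOn_id.mul <| (continuousOn_const.add continuousOn_id).inv₀
    fun x hx => by have := hs x hx; simp only [Pi.add_apply, id]; positivity

set_option maxHeartbeats 1000000 in
private lemma aux_norm_sq_le (d z : B) (hd : 0 ≤ d) (hzd : star z * z ≤ d)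
    {c : ℝ} (hc : 0 < c) :
    ‖z - z * cfcₙ (fun s : ℝ => s * (c + s)⁻¹) d‖ ^ 2 ≤ c / 4 := by
  set g : ℝ → ℝ := fun s => s * (c + s)⁻¹ with hgdef
  have hg0 : g 0 = 0 := by simp [hgdef]
  have hD : (0 : Unitization ℂ B) ≤ (d : Unitization ℂ B) := inr_nonneg_iff.mpr hd
  have hσ' : ∀ x ∈ spectrum ℝ ((d : Unitization ℂ B)), 0 ≤ x := by
    rw [← Unitization.quasispectrum_eq_spectrum_inr' ℝ ℂ d]
    exact quasispectrum_nonneg_of_nonneg d hd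
  have hgc' : ContinuousOn g (spectrum ℝ ((d : Unitization ℂ B))) := myContOn hc hσ'
  have h1c : ContinuousOn (fun s : ℝ => 1 - g s) (spectrum ℝ ((d : Unitization ℂ B))) :=
    continuousOn_const.sub hgc'
  set D := (d : Unitization ℂ B) with hDdef
  set V := cfc g D with hVdef
  have hVsa : IsSelfAdjoint V := cfc_predicate g D
  have hWsa : IsSelfAdjoint (1 - V) := (IsSelfAdjoint.one (Unitization ℂ B)).sub hVsa
  have hcoe : ((z - z * cfcₙ g d : B) : Unitization ℂ B) = (z : Unitization ℂ B) * (1 - V) := by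
    rw [inr_sub ℂ, inr_mul ℂ, Unitization.real_cfcₙ_eq_cfc_inr d g hg0, mul_sub, mul_one]
  rw [← norm_inr (𝕜 := ℂ) (z - z * cfcₙ g d), hcoe]
  set Z := (z : Unitization ℂ B) with hZdef
  have hsq : ‖Z * (1 - V)‖ ^ 2 = ‖star (Z * (1 - V)) * (Z * (1 - V))‖ := by
    rw [CStarRing.norm_star_mul_self, sq]
  rw [hsq]
  have hexp : star (Z * (1 - V)) * (Z * (1 - V)) = (1 - V) * (star Z * Z) * (1 - V) := by
    rw [star_mul, hWsa.star_eq]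
    noncomm_ring
  rw [hexp]
  have hle : star Z * Z ≤ D := by
    have h1 : ((star z * z : B) : Unitization ℂ B) ≤ D := by
      rw [hDdef, inr_le_iff _ _ (IsSelfAdjoint.of_nonneg (star_mul_self_nonneg z))
        (IsSelfAdjoint.of_nonneg hd)]
      exact hzd
    rwa [inr_mul, inr_star] at h1
  have hconj : (1 - V) * (star Z * Z) * (1 - V) ≤ (1 - V) * D * (1 - V) := by
    have := star_left_conjugate_le_conjugate hle (1 - V)
    rwa [hWsa.star_eq] at this
  have hnn : (0 : Unitization ℂ B) ≤ (1 - V) * (star Z * Z) * (1 - V) := by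
    have := star_left_conjugate_nonneg (star_mul_self_nonneg Z) (1 - V)
    rwa [hWsa.star_eq] at this
  refine le_trans (CStarAlgebra.norm_le_norm_of_nonneg_of_le hnn hconj) ?_
  have hDsa : IsSelfAdjoint D := IsSelfAdjoint.of_nonneg hD
  have h1V : cfc (fun s : ℝ => 1 - g s) D = 1 - V := by
    rw [cfc_sub (fun _ : ℝ => (1:ℝ)) g D continuousOn_const hgc', cfc_const_one ℝ D hDsa]
  have hfact : cfc (fun s : ℝ => (1 - g s) * s * (1 - g s)) D = (1 - V) * D * (1 - V) := by
    rw [cfc_mul (fun s : ℝ => (1 - g s) * s) (fun s : ℝ => 1 - g s) D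
      (h1c.mul (continuousOn_id' _)) h1c,
      cfc_mul (fun s : ℝ => 1 - g s) (fun s : ℝ => s) D h1c (continuousOn_id' _),
      cfc_id' ℝ D hDsa, h1V]
  rw [← hfact]
  refine norm_cfc_le (by positivity) fun s hs => ?_
  have hs0 : 0 ≤ s := hσ' s hs
  have hcs : 0 < c + s := by positivity
  have h1g : 1 - g s = c * (c + s)⁻¹ := by
    simp only [hgdef]
    field_simp
    ring
  rw [h1g, Real.norm_eq_abs, abs_of_nonneg (by positivity),
    show c * (c + s)⁻¹ * s * (c * (c + s)⁻¹) = c ^ 2 * s / (c + s) ^ 2 by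
      field_simp,
    div_le_div_iff₀ (by positivity) (by norm_num : (0:ℝ) < 4)]
  nlinarith [mul_nonneg hc.le (sq_nonneg (c - s))]

private lemma cfcq_mem_closure (d : B) (hd : 0 ≤ d) {c : ℝ} (hc : 0 < c) :
    cfcₙ (fun s : ℝ => s * (c + s)⁻¹) d ∈
      closure (Set.range fun x : B => x * cfcₙ Real.sqrt d) := by
  have hσ : ∀ x ∈ quasispectrum ℝ d, 0 ≤ x := quasispectrum_nonneg_of_nonneg d hd
  have hdsa : IsSelfAdjoint d := .of_nonneg hd
  have hgc : ContinuousOn (fun s : ℝ => s * (c + s)⁻¹) (quasispectrum ℝ d) := myContOn hc hσ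
  rw [Metric.mem_closure_iff]
  intro ε hε
  set ε' : ℝ := min 1 (ε / 2) with hε'def
  have hε'pos : 0 < ε' := lt_min one_pos (by linarith)
  have hε'le1 : ε' ≤ 1 := min_le_left _ _
  set c' : ℝ := ε' ^ 2 * c with hc'def
  have hc'pos : 0 < c' := by positivity
  have hq'c : ContinuousOn (fun s : ℝ => Real.sqrt s * (c' + s)⁻¹) (quasispectrum ℝ d) :=
    Real.continuous_sqrt.continuousOn.mul <| (continuousOn_const.add continuousOn_id).inv₀
      fun x hx => by have := hσ x hx; simp only [Pi.add_apply, id]; positivity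
  have hfc : ContinuousOn (fun s : ℝ => s * (c + s)⁻¹ * (Real.sqrt s * (c' + s)⁻¹))
      (quasispectrum ℝ d) := hgc.mul hq'c
  refine ⟨cfcₙ (fun s : ℝ => s * (c + s)⁻¹ * (Real.sqrt s * (c' + s)⁻¹)) d
    * cfcₙ Real.sqrt d, ⟨_, rfl⟩, ?_⟩
  have hmul : cfcₙ (fun s : ℝ => s * (c + s)⁻¹ * (Real.sqrt s * (c' + s)⁻¹)) d
      * cfcₙ Real.sqrt d = cfcₙ (fun s : ℝ => s * (c + s)⁻¹ * (s * (c' + s)⁻¹)) d := by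
    rw [← cfcₙ_mul (fun s : ℝ => s * (c + s)⁻¹ * (Real.sqrt s * (c' + s)⁻¹)) Real.sqrt d
      (hf := hfc) (hf0 := by simp) (hg := Real.continuous_sqrt.continuousOn)
      (hg0 := Real.sqrt_zero)]
    apply cfcₙ_congr
    intro s hs
    have hs0 := hσ s hs
    have hss : Real.sqrt s * Real.sqrt s = s := Real.mul_self_sqrt hs0
    show s * (c + s)⁻¹ * (Real.sqrt s * (c' + s)⁻¹) * Real.sqrt s
      = s * (c + s)⁻¹ * (s * (c' + s)⁻¹)
    linear_combination (s * (c + s)⁻¹ * (c' + s)⁻¹) * hss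
  rw [hmul, dist_eq_norm, ← cfcₙ_sub (fun s : ℝ => s * (c + s)⁻¹)
    (fun s : ℝ => s * (c + s)⁻¹ * (s * (c' + s)⁻¹)) d
    (hf := hgc) (hf0 := by simp) (hg := hgc.mul (myContOn hc'pos hσ)) (hg0 := by simp)]
  refine lt_of_le_of_lt (norm_cfcₙ_le fun s hs => ?_)
    (lt_of_le_of_lt (min_le_right 1 (ε / 2)) (by linarith))
  have hs0 := hσ s hs
  have hcs : 0 < c + s := by positivity
  have hc's : 0 < c' + s := by positivity
  have heq : s * (c + s)⁻¹ - s * (c + s)⁻¹ * (s * (c' + s)⁻¹)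
      = s * c' / ((c + s) * (c' + s)) := by
    field_simp
    ring
  rw [heq, Real.norm_eq_abs, abs_of_nonneg (by positivity),
    div_le_iff₀ (by positivity)]
  have expand : ε' * ((c + s) * (c' + s)) - s * c'
      = ε' * (ε' ^ 2 * c ^ 2) + ε' * s ^ 2 + (ε' * (c * s)) * (1 - ε')
        + ε' ^ 2 * (ε' * (c * s)) := by
    simp only [hc'def]; ring
  nlinarith [mul_nonneg (mul_nonneg hε'pos.le (mul_nonneg hc.le hs0)) (by linarith : (0:ℝ) ≤ 1 - ε'),
    mul_nonneg hε'pos.le (sq_nonneg s),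
    mul_nonneg hε'pos.le (mul_nonneg (sq_nonneg ε') (sq_nonneg c)),
    mul_nonneg (sq_nonneg ε') (mul_nonneg hε'pos.le (mul_nonneg hc.le hs0))]

private lemma closure_range_mul_left (w : B) {u : B}
    (hu : u ∈ closure (Set.range fun x : B => x * w)) (z : B) :
    z * u ∈ closure (Set.range fun x : B => x * w) := by
  have h2 := image_closure_subset_closure_image
    (f := fun x : B => z * x) (s := Set.range fun x : B => x * w)
    (continuous_const.mul continuous_id)
  have h3 : ((fun x : B => z * x) '' (Set.range fun x : B => x * w))
      ⊆ (Set.range fun x : B => x * w) := by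
    rintro _ ⟨_, ⟨x, rfl⟩, rfl⟩
    exact ⟨z * x, mul_assoc z x w⟩
  exact closure_mono h3 (h2 ⟨u, hu, rfl⟩)

private lemma closure_range_smul_left (w : B) {u : B}
    (hu : u ∈ closure (Set.range fun x : B => x * w)) (r : ℝ) :
    r • u ∈ closure (Set.range fun x : B => x * w) := by
  have h2 := image_closure_subset_closure_image
    (f := fun x : B => r • x) (s := Set.range fun x : B => x * w)
    (continuous_const_smul r)
  have h3 : ((fun x : B => r • x) '' (Set.range fun x : B => x * w))
      ⊆ (Set.range fun x : B => x * w) := by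
    rintro _ ⟨_, ⟨x, rfl⟩, rfl⟩
    exact ⟨r • x, smul_mul_assoc r x w⟩
  exact closure_mono h3 (h2 ⟨u, hu, rfl⟩)

private lemma mem_closure_mul_sqrt (h' z : B) (hh : 0 ≤ h') (hz : star z * z ≤ h') :
    z ∈ closure (Set.range fun x : B => x * cfcₙ Real.sqrt h') := by
  rw [Metric.mem_closure_iff]
  intro ε hε
  set c : ℝ := min 1 (ε ^ 2) with hcdef
  have hcpos : 0 < c := lt_min one_pos (by positivity)
  have h1 := aux_norm_sq_le h' z hh hz hcpos
  set v := cfcₙ (fun s : ℝ => s * (c + s)⁻¹) h' with hvdef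
  have h2 : z * v ∈ closure (Set.range fun x : B => x * cfcₙ Real.sqrt h') :=
    closure_range_mul_left _ (cfcq_mem_closure h' hh hcpos) z
  obtain ⟨y, hyS, hy⟩ := Metric.mem_closure_iff.mp h2 (ε / 2) (by linarith)
  refine ⟨y, hyS, ?_⟩
  have h3 : ‖z - z * v‖ ≤ ε / 2 := by
    have h4 : ‖z - z * v‖ ^ 2 ≤ (ε / 2) ^ 2 := by
      calc ‖z - z * v‖ ^ 2 ≤ c / 4 := h1
        _ ≤ ε ^ 2 / 4 := by
            have := min_le_right 1 (ε ^ 2); rw [← hcdef] at this; linarith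
        _ = (ε / 2) ^ 2 := by ring
    exact (pow_le_pow_iff_left₀ (norm_nonneg _) (by positivity) two_ne_zero).mp h4
  calc dist z y ≤ dist z (z * v) + dist (z * v) y := dist_triangle _ _ _
    _ < ε := by rw [dist_eq_norm]; linarith

private lemma star_mem_closure_flip {w b : B} (hw : star w = w)
    (hb : b ∈ closure (Set.range fun x : B => x * w)) :
    star b ∈ closure (Set.range fun x : B => w * x) := by
  have h1 : star b ∈ star '' closure (Set.range fun x : B => x * w) := ⟨b, hb, rfl⟩
  have h2 := image_closure_subset_closure_image
    (f := (star : B → B)) (s := Set.range fun x : B => x * w) continuous_star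
  have h3 : (star '' Set.range fun x : B => x * w) ⊆ Set.range fun x : B => w * x := by
    rintro _ ⟨_, ⟨x, rfl⟩, rfl⟩
    exact ⟨star x, by rw [star_mul, hw]⟩
  exact closure_mono h3 (h2 h1)

private lemma tendsto_mul_of_approx (s0 : B) (e : ℕ → B) (he : ∀ n, ‖e n‖ ≤ 1)
    (η : ℕ → ℝ) (hη : Tendsto η atTop (𝓝 0)) (happ : ∀ n, ‖e n * s0 - s0‖ ≤ η n)
    (b : B) (hb : b ∈ closure (Set.range fun x : B => s0 * x)) :
    Tendsto (fun n => ‖e n * b - b‖) atTop (𝓝 0) := by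
  rw [Metric.tendsto_atTop]
  intro ε hε
  obtain ⟨y, ⟨x, rfl⟩, hy⟩ := Metric.mem_closure_iff.mp hb (ε / 3) (by linarith)
  rw [dist_eq_norm] at hy
  obtain ⟨N, hN⟩ := Metric.tendsto_atTop.mp hη (ε / (3 * (‖x‖ + 1))) (by positivity)
  refine ⟨N, fun n hn => ?_⟩
  have h1 : ‖e n * (b - s0 * x)‖ ≤ ‖b - s0 * x‖ := by
    calc ‖e n * (b - s0 * x)‖ ≤ ‖e n‖ * ‖b - s0 * x‖ := norm_mul_le _ _
      _ ≤ 1 * ‖b - s0 * x‖ := mul_le_mul_of_nonneg_right (he n) (norm_nonneg _)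
      _ = ‖b - s0 * x‖ := one_mul _
  have h2 : ‖(e n * s0 - s0) * x‖ ≤ η n * ‖x‖ :=
    le_trans (norm_mul_le _ _) (mul_le_mul_of_nonneg_right (happ n) (norm_nonneg _))
  have hNn := hN n hn
  rw [Real.dist_eq, sub_zero] at hNn
  have h3 : η n * ‖x‖ < ε / 3 := by
    have e1 : η n * ‖x‖ ≤ |η n| * ‖x‖ :=
      mul_le_mul_of_nonneg_right (le_abs_self _) (norm_nonneg x)
    have e2 : |η n| * ‖x‖ ≤ |η n| * (‖x‖ + 1) := by
      have := abs_nonneg (η n); nlinarith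
    have e3 : |η n| * (‖x‖ + 1) < (ε / (3 * (‖x‖ + 1))) * (‖x‖ + 1) :=
      mul_lt_mul_of_pos_right hNn (by positivity)
    have e4 : (ε / (3 * (‖x‖ + 1))) * (‖x‖ + 1) = ε / 3 := by
      field_simp
    linarith
  have hkey : e n * b - b = e n * (b - s0 * x) + ((e n * s0 - s0) * x + (s0 * x - b)) := by
    noncomm_ring
  rw [Real.dist_eq, sub_zero, abs_of_nonneg (norm_nonneg _), hkey]
  calc ‖e n * (b - s0 * x) + ((e n * s0 - s0) * x + (s0 * x - b))‖
      ≤ ‖e n * (b - s0 * x)‖ + (‖(e n * s0 - s0) * x‖ + ‖s0 * x - b‖) :=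
        le_trans (norm_add_le _ _) (by gcongr; exact norm_add_le _ _)
    _ < ε := by
        have h5 : ‖s0 * x - b‖ = ‖b - s0 * x‖ := norm_sub_rev _ _
        linarith

private lemma acc_lemma (h : B) (hh : 0 ≤ h)
    (hd1 : ∀ b : B, b ∈ closure (Set.range fun x : B => x * cfcₙ Real.sqrt h))
    (hd2 : ∀ b : B, b ∈ closure (Set.range fun x : B => cfcₙ Real.sqrt h * x))
    (hnonunital : ¬ ∃ e : B, ∀ b : B, e * b = b ∧ b * e = b)
    {δ : ℝ} (hδ : 0 < δ) : ∃ s, s ∈ quasispectrum ℝ h ∧ 0 < s ∧ s < δ := by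
  by_contra hcon
  push_neg at hcon
  have hσ : ∀ x ∈ quasispectrum ℝ h, 0 ≤ x := quasispectrum_nonneg_of_nonneg h hh
  have hsa : IsSelfAdjoint h := .of_nonneg hh
  set g : ℝ → ℝ := fun s => min 1 (s / δ) with hgdef
  have hgc : ContinuousOn g (quasispectrum ℝ h) :=
    (continuous_const.min (continuous_id.div_const δ)).continuousOn
  have hg0 : g 0 = 0 := by simp [hgdef]
  set p := cfcₙ g h with hpdef
  have hps0 : p * cfcₙ Real.sqrt h = cfcₙ Real.sqrt h := by
    rw [hpdef, ← cfcₙ_mul g Real.sqrt h (hf := hgc) (hf0 := hg0)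
      (hg := Real.continuous_sqrt.continuousOn) (hg0 := Real.sqrt_zero)]
    apply cfcₙ_congr
    intro s hs
    have hs0 := hσ s hs
    rcases eq_or_lt_of_le hs0 with heq | hlt
    · show g s * Real.sqrt s = Real.sqrt s
      rw [← heq, Real.sqrt_zero, mul_zero]
    · have hδs : δ ≤ s := hcon s hs hlt
      show g s * Real.sqrt s = Real.sqrt s
      have hg1 : g s = 1 := min_eq_left (by rw [le_div_iff₀ hδ]; linarith)
      rw [hg1, one_mul]
  have hsap : star p = p := (cfcₙ_predicate g h).star_eq
  have hss : star (cfcₙ Real.sqrt h) = cfcₙ Real.sqrt h := (cfcₙ_predicate Real.sqrt h).star_eq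
  have hs0p : cfcₙ Real.sqrt h * p = cfcₙ Real.sqrt h := by
    have := congrArg star hps0
    rwa [star_mul, hsap, hss] at this
  refine hnonunital ⟨p, fun b => ⟨?_, ?_⟩⟩
  · have hcl : IsClosed {y : B | p * y = y} :=
      isClosed_eq (continuous_const.mul continuous_id) continuous_id
    have hsub : (Set.range fun x : B => cfcₙ Real.sqrt h * x) ⊆ {y : B | p * y = y} := by
      rintro _ ⟨x, rfl⟩
      show p * (cfcₙ Real.sqrt h * x) = cfcₙ Real.sqrt h * x
      rw [← mul_assoc, hps0]
    exact closure_minimal hsub hcl (hd2 b)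
  · have hcl : IsClosed {y : B | y * p = y} :=
      isClosed_eq (continuous_id.mul continuous_const) continuous_id
    have hsub : (Set.range fun x : B => x * cfcₙ Real.sqrt h) ⊆ {y : B | y * p = y} := by
      rintro _ ⟨x, rfl⟩
      show x * cfcₙ Real.sqrt h * p = x * cfcₙ Real.sqrt h
      rw [mul_assoc, hs0p]
    exact closure_minimal hsub hcl (hd1 b)

private lemma exists_t {K : Set ℝ} (hacc : ∀ δ : ℝ, 0 < δ → ∃ s, s ∈ K ∧ 0 < s ∧ s < δ) :
    ∃ t : ℕ → ℝ, (∀ n, t n ∈ K) ∧ (∀ n, 0 < t n) ∧ (∀ n, t (n + 1) < t n / 2) := by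
  have hex : ∀ δ : ℝ, ∃ s, 0 < δ → (s ∈ K ∧ 0 < s ∧ s < δ) := by
    intro δ
    by_cases hδ : 0 < δ
    · obtain ⟨s, hs⟩ := hacc δ hδ
      exact ⟨s, fun _ => hs⟩
    · exact ⟨0, fun hc => absurd hc hδ⟩
  choose F hF using hex
  refine ⟨fun n => Nat.rec (F 1) (fun _ prev => F (prev / 2)) n, ?_, ?_, ?_⟩ <;>
    [skip; skip; skip]
  all_goals
    have hbasic : ∀ n, (Nat.rec (F 1) (fun _ prev => F (prev / 2)) n : ℝ) ∈ K ∧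
        0 < (Nat.rec (F 1) (fun _ prev => F (prev / 2)) n : ℝ) := by
      intro n
      induction n with
      | zero => exact ⟨(hF 1 one_pos).1, (hF 1 one_pos).2.1⟩
      | succ n ih =>
          have h2 : 0 < (Nat.rec (F 1) (fun _ prev => F (prev / 2)) n : ℝ) / 2 := by
            linarith [ih.2]
          exact ⟨(hF _ h2).1, (hF _ h2).2.1⟩
  · exact fun n => (hbasic n).1
  · exact fun n => (hbasic n).2
  · intro n
    have h2 : 0 < (Nat.rec (F 1) (fun _ prev => F (prev / 2)) n : ℝ) / 2 := by
      linarith [(hbasic n).2]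
    exact (hF _ h2).2.2

end AuxLemmas

/-- Every separable, simple, non-unital C*-algebra `B` admits a strictly increasing sequential
approximate identity `(e n)` of positive contractions with `e n * e (n+1) = e n` and
`‖e (n+1) - e n‖ = 1` for all `n`. -/
theorem exists_special_approximate_identity
    {B : Type*} [NonUnitalCStarAlgebra B] [PartialOrder B] [StarOrderedRing B]
    [Nontrivial B] [TopologicalSpace.SeparableSpace B]
    (hsimple : ∀ I : TwoSidedIdeal B, IsClosed (I : Set B) → I = ⊥ ∨ I = ⊤)
    (hnonunital : ¬ ∃ e : B, ∀ b : B, e * b = b ∧ b * e = b) :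
    ∃ e : ℕ → B,
      (∀ n, 0 ≤ e n) ∧ (∀ n, ‖e n‖ ≤ 1) ∧
      (∀ n, e n ≤ e (n + 1)) ∧ (∀ n, e n ≠ e (n + 1)) ∧
      (∀ n, e n * e (n + 1) = e n) ∧ (∀ n, ‖e (n + 1) - e n‖ = 1) ∧
      (∀ b : B, Tendsto (fun n => ‖e n * b - b‖) atTop (𝓝 0) ∧
        Tendsto (fun n => ‖b * e n - b‖) atTop (𝓝 0)) := by
  classical
  -- a dense sequence
  obtain ⟨bs, hbs⟩ := TopologicalSpace.exists_dense_seq B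
  -- the strictly positive element `h`
  have hrpos : ∀ j : ℕ, (0:ℝ) < 2 ^ j * (1 + ‖bs j‖ ^ 2) := fun j => by positivity
  set cs : ℕ → B := fun j => (Real.sqrt (2 ^ j * (1 + ‖bs j‖ ^ 2)))⁻¹ • bs j with hcsdef
  have hanorm : ∀ j, ‖star (cs j) * cs j‖ ≤ (1 / 2) ^ j := by
    intro j
    set r : ℝ := 2 ^ j * (1 + ‖bs j‖ ^ 2) with hrdef
    have hr : 0 < r := hrpos j
    have h1 : ‖star (cs j) * cs j‖ = ‖cs j‖ * ‖cs j‖ := CStarRing.norm_star_mul_self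
    have h2 : ‖cs j‖ = (Real.sqrt r)⁻¹ * ‖bs j‖ := by
      rw [hcsdef]
      simp only [norm_smul, Real.norm_eq_abs]
      rw [abs_of_nonneg (by positivity)]
    have hinv : (Real.sqrt r)⁻¹ * (Real.sqrt r)⁻¹ = r⁻¹ := by
      rw [← mul_inv, Real.mul_self_sqrt hr.le]
    have h3 : ‖cs j‖ * ‖cs j‖ = ‖bs j‖ ^ 2 / r := by
      rw [h2, show (Real.sqrt r)⁻¹ * ‖bs j‖ * ((Real.sqrt r)⁻¹ * ‖bs j‖)
        = ‖bs j‖ ^ 2 * ((Real.sqrt r)⁻¹ * (Real.sqrt r)⁻¹) by ring, hinv, div_eq_mul_inv]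
    rw [h1, h3, div_le_iff₀ hr]
    have h4 : ((1:ℝ) / 2) ^ j * r = 1 + ‖bs j‖ ^ 2 := by
      rw [hrdef, ← mul_assoc, ← mul_pow]
      norm_num
    rw [h4]
    linarith [sq_nonneg (‖bs j‖)]
  have hsummable : Summable fun j => star (cs j) * cs j :=
    Summable.of_norm_bounded summable_geometric_two hanorm
  set h : B := ∑' j, star (cs j) * cs j with hhdef
  have hh : 0 ≤ h := tsum_nonneg fun j => star_mul_self_nonneg _
  have hale : ∀ j, star (cs j) * cs j ≤ h :=
    fun j => Summable.le_tsum hsummable j fun i _ => star_mul_self_nonneg _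
  set s0 : B := cfcₙ Real.sqrt h with hs0def
  have hs0sa : star s0 = s0 := (cfcₙ_predicate Real.sqrt h).star_eq
  -- density
  have hdense1 : ∀ b : B, b ∈ closure (Set.range fun x : B => x * s0) := by
    have hsub : Set.range bs ⊆ closure (Set.range fun x : B => x * s0) := by
      rintro _ ⟨j, rfl⟩
      have hc : cs j ∈ closure (Set.range fun x : B => x * s0) :=
        mem_closure_mul_sqrt h (cs j) hh (hale j)
      have := closure_range_smul_left s0 hc (Real.sqrt (2 ^ j * (1 + ‖bs j‖ ^ 2)))
      rwa [hcsdef, smul_inv_smul₀ (by positivity : Real.sqrt (2 ^ j * (1 + ‖bs j‖ ^ 2)) ≠ 0)]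
        at this
    intro b
    have h1 : closure (Set.range bs) ⊆ closure (Set.range fun x : B => x * s0) := by
      rw [← closure_closure (s := Set.range fun x : B => x * s0)]
      exact closure_mono hsub
    rw [hbs.closure_range] at h1
    exact h1 (Set.mem_univ b)
  have hdense2 : ∀ b : B, b ∈ closure (Set.range fun x : B => s0 * x) := by
    intro b
    have := star_mem_closure_flip hs0sa (hdense1 (star b))
    rwa [star_star] at this
  -- quasispectrum accumulates at 0
  have hacc : ∀ δ : ℝ, 0 < δ → ∃ s, s ∈ quasispectrum ℝ h ∧ 0 < s ∧ s < δ := fun δ hδ => by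
    obtain ⟨s, hs1, hs2, hs3⟩ := acc_lemma h hh hdense1 hdense2 hnonunital hδ
    exact ⟨s, hs1, hs2, hs3⟩
  obtain ⟨t, htK, htpos, htdec⟩ := exists_t hacc
  have htlt : ∀ n, t (n + 1) < t n := fun n => (htdec n).trans_le (by linarith [htpos n])
  have hden : ∀ n, (0:ℝ) < t n - t (n + 1) := fun n => by linarith [htlt n]
  -- ramps
  set f : ℕ → ℝ → ℝ := fun n s => max 0 (min 1 ((s - t (n + 1)) / (t n - t (n + 1)))) with hfdef
  have hfc : ∀ n, Continuous (f n) := fun n =>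
    continuous_const.max (continuous_const.min
      ((continuous_id.sub continuous_const).div_const _))
  have hrange : ∀ n s, 0 ≤ f n s ∧ f n s ≤ 1 := fun n s =>
    ⟨le_max_left _ _, max_le zero_le_one (min_le_left _ _)⟩
  have hone : ∀ n s, t n ≤ s → f n s = 1 := by
    intro n s hs
    have h1 : (1:ℝ) ≤ (s - t (n + 1)) / (t n - t (n + 1)) :=
      (one_le_div (hden n)).mpr (by linarith)
    simp only [hfdef]
    rw [min_eq_left h1, max_eq_right zero_le_one]
  have hzero : ∀ n s, s ≤ t (n + 1) → f n s = 0 := by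
    intro n s hs
    have h1 : (s - t (n + 1)) / (t n - t (n + 1)) ≤ 0 :=
      div_nonpos_of_nonpos_of_nonneg (by linarith) (hden n).le
    simp only [hfdef]
    rw [min_eq_right (h1.trans zero_le_one), max_eq_left h1]
  have hf0 : ∀ n, f n 0 = 0 := fun n => hzero n 0 (htpos (n + 1)).le
  have hmono : ∀ n s, f n s ≤ f (n + 1) s := by
    intro n s
    rcases le_or_gt s (t (n + 1)) with hs | hs
    · rw [hzero n s hs]; exact (hrange (n + 1) s).1
    · rw [hone (n + 1) s hs.le]; exact (hrange n s).2
  have hprod : ∀ n s, f n s * f (n + 1) s = f n s := by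
    intro n s
    rcases le_or_gt s (t (n + 1)) with hs | hs
    · rw [hzero n s hs, zero_mul]
    · rw [hone (n + 1) s hs.le, mul_one]
  -- the approximate identity
  set e : ℕ → B := fun n => cfcₙ (f n) h with hedef
  have hsa : IsSelfAdjoint h := .of_nonneg hh
  have hσh : ∀ x ∈ quasispectrum ℝ h, 0 ≤ x := quasispectrum_nonneg_of_nonneg h hh
  have he_nonneg : ∀ n, 0 ≤ e n := fun n => cfcₙ_nonneg fun x _ => (hrange n x).1
  have he_norm : ∀ n, ‖e n‖ ≤ 1 := fun n => norm_cfcₙ_le fun x _ => by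
    rw [Real.norm_eq_abs, abs_of_nonneg (hrange n x).1]; exact (hrange n x).2
  have he_mono : ∀ n, e n ≤ e (n + 1) := fun n =>
    cfcₙ_mono (fun x _ => hmono n x) ((hfc n).continuousOn) ((hfc (n + 1)).continuousOn)
      (hf0 n) (hf0 (n + 1))
  have he_mul : ∀ n, e n * e (n + 1) = e n := by
    intro n
    have h1 : cfcₙ (fun s => f n s * f (n + 1) s) h = cfcₙ (f n) h * cfcₙ (f (n + 1)) h :=
      cfcₙ_mul (f n) (f (n + 1)) h (hf := (hfc n).continuousOn) (hf0 := hf0 n)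
        (hg := (hfc (n + 1)).continuousOn) (hg0 := hf0 (n + 1))
    have h2 : cfcₙ (fun s => f n s * f (n + 1) s) h = cfcₙ (f n) h :=
      cfcₙ_congr fun s _ => hprod n s
    simp only [hedef]
    rw [← h1, h2]
  have hdiffc : ∀ n, Continuous fun s => f (n + 1) s - f n s := fun n =>
    (hfc (n + 1)).sub (hfc n)
  have hdiff : ∀ n, e (n + 1) - e n = cfcₙ (fun s => f (n + 1) s - f n s) h := by
    intro n
    simp only [hedef]
    exact (cfcₙ_sub (f (n + 1)) (f n) h (hf := (hfc (n + 1)).continuousOn) (hf0 := hf0 (n + 1))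
      (hg := (hfc n).continuousOn) (hg0 := hf0 n)).symm
  have he_normdiff : ∀ n, ‖e (n + 1) - e n‖ = 1 := by
    intro n
    rw [hdiff n]
    refine le_antisymm (norm_cfcₙ_le fun s _ => ?_) ?_
    · rw [Real.norm_eq_abs, abs_of_nonneg (by linarith [hmono n s] : 0 ≤ f (n + 1) s - f n s)]
      linarith [(hrange (n + 1) s).2, (hrange n s).1]
    · have hmem := htK (n + 1)
      have hb := norm_apply_le_norm_cfcₙ (fun s => f (n + 1) s - f n s) h hmem
        ((hdiffc n).continuousOn)
        (by show f (n + 1) 0 - f n 0 = 0; rw [hf0 n, hf0 (n + 1)]; ring) hsa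
      have hb2 : ‖f (n + 1) (t (n + 1)) - f n (t (n + 1))‖
          ≤ ‖cfcₙ (fun s => f (n + 1) s - f n s) h‖ := hb
      rwa [hone (n + 1) (t (n + 1)) le_rfl, hzero n (t (n + 1)) le_rfl, sub_zero,
        norm_one] at hb2
  have he_ne : ∀ n, e n ≠ e (n + 1) := by
    intro n hne
    have hcontra := he_normdiff n
    rw [← hne, sub_self, norm_zero] at hcontra
    exact zero_ne_one hcontra
  -- convergence of `t` and the approximation bound
  have htge : ∀ n, t n ≤ t 0 * (1 / 2) ^ n := by
    intro n
    induction n with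
    | zero => simp
    | succ n ih =>
        have h1 := htdec n
        calc t (n + 1) ≤ t n / 2 := h1.le
          _ ≤ (t 0 * (1 / 2) ^ n) / 2 := by linarith
          _ = t 0 * (1 / 2) ^ (n + 1) := by ring
  have ht0 : Tendsto t atTop (𝓝 0) := by
    refine squeeze_zero (fun n => (htpos n).le) htge ?_
    have := (tendsto_pow_atTop_nhds_zero_of_lt_one (by norm_num : (0:ℝ) ≤ 1 / 2)
      (by norm_num : (1:ℝ) / 2 < 1)).const_mul (t 0)
    simpa using this
  have hst : Tendsto (fun n => Real.sqrt (t n)) atTop (𝓝 0) := by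
    have := (Real.continuous_sqrt.tendsto 0).comp ht0
    simpa [Real.sqrt_zero, Function.comp_def] using this
  have happ : ∀ n, ‖e n * s0 - s0‖ ≤ Real.sqrt (t n) := by
    intro n
    have h1 : e n * s0 = cfcₙ (fun s => f n s * Real.sqrt s) h := by
      simp only [hedef, hs0def]
      exact (cfcₙ_mul (f n) Real.sqrt h (hf := (hfc n).continuousOn) (hf0 := hf0 n)
        (hg := Real.continuous_sqrt.continuousOn) (hg0 := Real.sqrt_zero)).symm
    rw [h1, hs0def, ← cfcₙ_sub (fun s => f n s * Real.sqrt s) Real.sqrt h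
      (hf := ((hfc n).mul Real.continuous_sqrt).continuousOn)
      (hf0 := by show f n 0 * Real.sqrt 0 = 0; rw [hf0 n, zero_mul])
      (hg := Real.continuous_sqrt.continuousOn) (hg0 := Real.sqrt_zero)]
    refine norm_cfcₙ_le fun s hs => ?_
    have hs0 := hσh s hs
    rw [Real.norm_eq_abs]
    rcases le_or_gt (t n) s with hts | hts
    · rw [hone n s hts, one_mul, sub_self, abs_zero]
      exact Real.sqrt_nonneg _
    · have habs : |f n s * Real.sqrt s - Real.sqrt s| = (1 - f n s) * Real.sqrt s := by
        rw [abs_of_nonpos (by nlinarith [(hrange n s).2, Real.sqrt_nonneg s] :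
          f n s * Real.sqrt s - Real.sqrt s ≤ 0)]
        ring
      rw [habs]
      calc (1 - f n s) * Real.sqrt s ≤ 1 * Real.sqrt s := by
            nlinarith [(hrange n s).1, Real.sqrt_nonneg s]
        _ = Real.sqrt s := one_mul _
        _ ≤ Real.sqrt (t n) := Real.sqrt_le_sqrt hts.le
  have hleft : ∀ b : B, Tendsto (fun n => ‖e n * b - b‖) atTop (𝓝 0) := fun b =>
    tendsto_mul_of_approx s0 e he_norm _ hst happ b (hdense2 b)
  have hright : ∀ b : B, Tendsto (fun n => ‖b * e n - b‖) atTop (𝓝 0) := by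
    intro b
    have hsa_e : ∀ n, star (e n) = e n := fun n => (IsSelfAdjoint.of_nonneg (he_nonneg n)).star_eq
    have heq : (fun n => ‖b * e n - b‖) = fun n => ‖e n * star b - star b‖ := by
      funext n
      rw [← norm_star (e n * star b - star b), star_sub, star_mul, star_star, hsa_e n]
    rw [heq]
    exact hleft (star b)
  exact ⟨e, he_nonneg, he_norm, he_mono, he_ne, he_mul, he_normdiff,
    fun b => ⟨hleft b, hright b⟩⟩
end
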